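/- The cubic polynomial 17x^3 - 924x^2y - 153xy^2 - 996y^3 + 1164x^2z + 544xyz + 6516y^2z - 544xz^2 - 7680yz^2 is irreducible over the field of complex numbers. -/

import Mathlib

set_option maxHeartbeats 1000000

open MvPolynomial

/-- The cubic C3 ∈ ℂ[x,y,z]. -/
noncomputable def C3 : MvPolynomial (Fin 3) ℂ :=
  17 * X 0 ^ 3 - 924 * X 0 ^ 2 * X 1 - 153 * X 0 * X 1 ^ 2 - 996 * X 1 ^ 3
    + 1164 * X 0 ^ 2 * X 2 + 544 * X 0 * X 1 * X 2 + 6516 * X 1 ^ 2 * X 2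
    - 544 * X 0 * X 2 ^ 2 - 7680 * X 1 * X 2 ^ 2

namespace StmtAux

open Polynomial

noncomputable section

abbrev A := Polynomial ℂ
abbrev B := Polynomial A
abbrev T := Polynomial B

def e1 : MvPolynomial (Fin 1) ℂ ≃ₐ[ℂ] A :=
  (MvPolynomial.finSuccEquiv ℂ 0).trans (Polynomial.mapAlgEquiv (MvPolynomial.isEmptyAlgEquiv ℂ (Fin 0)))
def e2 : MvPolynomial (Fin 2) ℂ ≃ₐ[ℂ] B :=
  (MvPolynomial.finSuccEquiv ℂ 1).trans (Polynomial.mapAlgEquiv e1)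
def Phi : MvPolynomial (Fin 3) ℂ ≃ₐ[ℂ] T :=
  (MvPolynomial.finSuccEquiv ℂ 2).trans (Polynomial.mapAlgEquiv e2)

lemma e1_X0 : e1 (X 0) = Polynomial.X := by
  simp [e1, MvPolynomial.finSuccEquiv_X_zero]
lemma e2_X0 : e2 (X 0) = Polynomial.X := by
  simp [e2, MvPolynomial.finSuccEquiv_X_zero]
lemma e2_X1 : e2 (X 1) = Polynomial.C Polynomial.X := by
  simp only [e2, AlgEquiv.trans_apply]
  rw [show (X 1 : MvPolynomial (Fin 2) ℂ) = X (Fin.succ 0) from rfl,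
    MvPolynomial.finSuccEquiv_X_succ]
  simp [e1_X0]
lemma Phi_X0 : Phi (X 0) = Polynomial.X := by
  simp [Phi, MvPolynomial.finSuccEquiv_X_zero]
lemma Phi_X1 : Phi (X 1) = Polynomial.C Polynomial.X := by
  simp only [Phi, AlgEquiv.trans_apply]
  rw [show (X 1 : MvPolynomial (Fin 3) ℂ) = X (Fin.succ 0) from rfl,
    MvPolynomial.finSuccEquiv_X_succ]
  simp [e2_X0]
lemma Phi_X2 : Phi (X 2) = Polynomial.C (Polynomial.C Polynomial.X) := by
  simp only [Phi, AlgEquiv.trans_apply]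
  rw [show (X 2 : MvPolynomial (Fin 3) ℂ) = X (Fin.succ 1) from rfl,
    MvPolynomial.finSuccEquiv_X_succ]
  simp [e2_X1]

def Z : B := Polynomial.C Polynomial.X
def b3 : B := Polynomial.C (Polynomial.C (17 : ℂ))
def b2 : B := -924 * Polynomial.X + 1164 * Z
def b1 : B := -153 * Polynomial.X ^ 2 + 544 * Polynomial.X * Z - 544 * Z ^ 2
def b0 : B := -996 * Polynomial.X ^ 3 + 6516 * Polynomial.X ^ 2 * Z - 7680 * Polynomial.X * Z ^ 2
def P : T := Polynomial.C b3 * Polynomial.X ^ 3 + Polynomial.C b2 * Polynomial.X ^ 2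
  + Polynomial.C b1 * Polynomial.X + Polynomial.C b0
def u : T := Polynomial.C (Polynomial.C (Polynomial.C ((17 : ℂ)⁻¹)))
def Q : T := u * P

lemma hPhiC3 : Phi C3 = P := by
  simp only [C3, map_add, map_sub, map_mul, map_pow, map_ofNat, Phi_X0, Phi_X1, Phi_X2,
    P, b3, b2, b1, b0, Z, map_neg]
  ring

lemma cubicB (a b c d : A) (h : Polynomial.C a * Polynomial.X ^ 3 + Polynomial.C b * Polynomial.X ^ 2
    + Polynomial.C c * Polynomial.X + Polynomial.C d = 0) : a = 0 ∧ b = 0 ∧ c = 0 ∧ d = 0 := by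
  refine ⟨?_, ?_, ?_, ?_⟩
  · simpa [Polynomial.coeff_X_pow, Polynomial.coeff_C] using congrArg (fun p : B => p.coeff 3) h
  · simpa [Polynomial.coeff_X_pow, Polynomial.coeff_C] using congrArg (fun p : B => p.coeff 2) h
  · simpa [Polynomial.coeff_X_pow, Polynomial.coeff_C] using congrArg (fun p : B => p.coeff 1) h
  · simpa [Polynomial.coeff_X_pow, Polynomial.coeff_C] using congrArg (fun p : B => p.coeff 0) h

lemma key (r : B) (h : b3 * r ^ 3 + b2 * r ^ 2 + b1 * r + b0 = 0) : False := by
  have hb3 : (b3 : B) ≠ 0 := by simp [b3]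
  -- step 1 : natDegree r ≤ 1
  have hr1 : r.natDegree ≤ 1 := by
    by_contra hm
    push_neg at hm
    have hr0 : r ≠ 0 := by rintro rfl; simp at hm
    have hL : (b3 * r ^ 3).natDegree = 3 * r.natDegree := by
      rw [Polynomial.natDegree_mul hb3 (pow_ne_zero _ hr0), Polynomial.natDegree_pow]
      simp [b3]
    have hEq : b3 * r ^ 3 = -(b2 * r ^ 2 + b1 * r + b0) := by linear_combination h
    have hbd2 : b2.natDegree ≤ 1 := by unfold b2 Z; compute_degree
    have hbd1 : b1.natDegree ≤ 2 := by unfold b1 Z; compute_degree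
    have hbd0 : b0.natDegree ≤ 3 := by unfold b0 Z; compute_degree
    have hR : (-(b2 * r ^ 2 + b1 * r + b0)).natDegree ≤ 2 * r.natDegree + 1 := by
      rw [Polynomial.natDegree_neg]
      refine le_trans (Polynomial.natDegree_add_le _ _) ?_
      have h1 : (b2 * r ^ 2 + b1 * r).natDegree ≤ 2 * r.natDegree + 1 := by
        refine le_trans (Polynomial.natDegree_add_le _ _) ?_
        have hA : (b2 * r ^ 2).natDegree ≤ 1 + 2 * r.natDegree := by
          refine le_trans (Polynomial.natDegree_mul_le) ?_
          have := Polynomial.natDegree_pow_le (p := r) (n := 2)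
          omega
        have hBB : (b1 * r).natDegree ≤ 2 + r.natDegree :=
          le_trans (Polynomial.natDegree_mul_le) (by omega)
        omega
      omega
    rw [hEq] at hL
    omega
  obtain ⟨t, s, rfl⟩ := Polynomial.exists_eq_X_add_C_of_natDegree_le_one hr1
  have hexp : Polynomial.C (17 * t ^ 3 - 924 * t ^ 2 - 153 * t - 996) * Polynomial.X ^ 3
      + Polynomial.C (51 * t ^ 2 * s - 1848 * t * s - 153 * s + 1164 * t ^ 2 * Polynomial.X
          + 544 * t * Polynomial.X + 6516 * Polynomial.X) * Polynomial.X ^ 2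
      + Polynomial.C (51 * t * s ^ 2 - 924 * s ^ 2 + 2328 * t * s * Polynomial.X
          + 544 * s * Polynomial.X - 544 * t * Polynomial.X ^ 2 - 7680 * Polynomial.X ^ 2) * Polynomial.X
      + Polynomial.C (17 * s ^ 3 + 1164 * s ^ 2 * Polynomial.X - 544 * s * Polynomial.X ^ 2) = (0 : B) := by
    simp only [b3, b2, b1, b0, Z, map_add, map_sub, map_mul, map_pow, map_ofNat] at h ⊢
    linear_combination h
  obtain ⟨h3, h2, h1, h0⟩ := cubicB _ _ _ _ hexp
  -- t is a constant
  have ht : t.natDegree = 0 := by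
    by_contra hk0
    have hk : 1 ≤ t.natDegree := Nat.one_le_iff_ne_zero.mpr hk0
    have ht0 : t ≠ 0 := by rintro rfl; simp at hk
    have hEq : (17 : A) * t ^ 3 = 924 * t ^ 2 + 153 * t + 996 := by linear_combination h3
    have hL : ((17 : A) * t ^ 3).natDegree = 3 * t.natDegree := by
      rw [Polynomial.natDegree_mul (by norm_num) (pow_ne_zero _ ht0), Polynomial.natDegree_pow]
      simp
    have hR : ((924 : A) * t ^ 2 + 153 * t + 996).natDegree ≤ 2 * t.natDegree := by
      refine le_trans (Polynomial.natDegree_add_le _ _) ?_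
      have hA : ((924 : A) * t ^ 2 + 153 * t).natDegree ≤ 2 * t.natDegree := by
        refine le_trans (Polynomial.natDegree_add_le _ _) ?_
        have h924 : ((924 : A) * t ^ 2).natDegree ≤ 2 * t.natDegree := by
          refine le_trans (Polynomial.natDegree_mul_le) ?_
          have := Polynomial.natDegree_pow_le (p := t) (n := 2)
          simp only [Polynomial.natDegree_ofNat]
          omega
        have h153 : ((153 : A) * t).natDegree ≤ t.natDegree := by
          refine le_trans (Polynomial.natDegree_mul_le) ?_
          simp
        omega
      simp only [Polynomial.natDegree_ofNat]
      omega
    rw [hEq] at hL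
    omega
  obtain ⟨τ, rfl⟩ := (Polynomial.natDegree_eq_zero).mp ht
  have he1 : 17 * τ ^ 3 - 924 * τ ^ 2 - 153 * τ - 996 = 0 := by
    have : Polynomial.C (17 * τ ^ 3 - 924 * τ ^ 2 - 153 * τ - 996) = (0 : A) := by
      simp only [map_sub, map_mul, map_pow, map_ofNat]
      linear_combination h3
    exact (Polynomial.C_eq_zero).mp this
  have h2' : Polynomial.C (51 * τ ^ 2 - 1848 * τ - 153) * s
      + Polynomial.C (1164 * τ ^ 2 + 544 * τ + 6516) * Polynomial.X = (0 : A) := by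
    simp only [map_add, map_sub, map_mul, map_pow, map_ofNat]
    linear_combination h2
  by_cases hc1 : 51 * τ ^ 2 - 1848 * τ - 153 = 0
  · have hc2 : 1164 * τ ^ 2 + 544 * τ + 6516 = 0 := by
      rw [hc1] at h2'
      simp only [map_zero, zero_mul, zero_add] at h2'
      rcases mul_eq_zero.mp h2' with hh | hh
      · exact (Polynomial.C_eq_zero).mp hh
      · exact absurd hh Polynomial.X_ne_zero
    have : (1 : ℂ) = 0 := by
      linear_combination (((-29623868 : ℂ)/29384553477) + ((1627427 : ℂ)/58769106954)*τ) * he1 + (((789667 : ℂ)/29384553477) + ((152462 : ℂ)/302933541)*τ + ((-1627427 : ℂ)/176307320862)*τ^2) * hc1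
    exact one_ne_zero this
  · set l : ℂ := -(1164 * τ ^ 2 + 544 * τ + 6516) / (51 * τ ^ 2 - 1848 * τ - 153) with hl
    have he2 : (51 * τ ^ 2 - 1848 * τ - 153) * l + (1164 * τ ^ 2 + 544 * τ + 6516) = 0 := by
      rw [hl, mul_div_assoc', mul_div_cancel_left₀ _ hc1]; ring
    have hs : s = Polynomial.C l * Polynomial.X := by
      have hC : Polynomial.C (51 * τ ^ 2 - 1848 * τ - 153) ≠ (0 : A) :=
        fun hh => hc1 (Polynomial.C_eq_zero.mp hh)
      apply mul_left_cancel₀ hC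
      have : Polynomial.C (51 * τ ^ 2 - 1848 * τ - 153) * (Polynomial.C l * Polynomial.X)
          = Polynomial.C ((51 * τ ^ 2 - 1848 * τ - 153) * l) * Polynomial.X := by
        rw [map_mul]; ring
      rw [this, show (51 * τ ^ 2 - 1848 * τ - 153) * l = -(1164 * τ ^ 2 + 544 * τ + 6516) by
        linear_combination he2]
      simp only [map_neg]
      linear_combination h2'
    subst hs
    have he3 : 51 * τ * l ^ 2 - 924 * l ^ 2 + 2328 * τ * l + 544 * l - 544 * τ - 7680 = 0 := by
      have hX : Polynomial.C (51 * τ * l ^ 2 - 924 * l ^ 2 + 2328 * τ * l + 544 * l - 544 * τ - 7680)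
          * Polynomial.X ^ 2 = (0 : A) := by
        simp only [map_add, map_sub, map_mul, map_pow, map_ofNat]
        linear_combination h1
      rcases mul_eq_zero.mp hX with hh | hh
      · exact (Polynomial.C_eq_zero).mp hh
      · exact absurd hh (pow_ne_zero _ Polynomial.X_ne_zero)
    have he4 : 17 * l ^ 3 + 1164 * l ^ 2 - 544 * l = 0 := by
      have hX : Polynomial.C (17 * l ^ 3 + 1164 * l ^ 2 - 544 * l) * Polynomial.X ^ 3 = (0 : A) := by
        simp only [map_add, map_sub, map_mul, map_pow, map_ofNat]
        linear_combination h0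
      rcases mul_eq_zero.mp hX with hh | hh
      · exact (Polynomial.C_eq_zero).mp hh
      · exact absurd hh (pow_ne_zero _ Polynomial.X_ne_zero)
    have : (1 : ℂ) = 0 := by
      linear_combination (((-40108899404091760191495317 : ℂ)/26102622714033648945393209514) + ((-2127012053504644703960407 : ℂ)/34803496952044865260524279352)*l + ((-7996570954485597965295 : ℂ)/2870391501199576516331899328)*l^2 + ((-7335704978070518848709 : ℂ)/89699734412486766135371854)*τ + ((-124706984627198820428053 : ℂ)/34803496952044865260524279352)*τ*l) * he1 + (((-21186345905507240605116987 : ℂ)/17401748476022432630262139676) + ((-13423936809593597306877 : ℂ)/358798937649947064541487416)*l + ((-4400104928403743087283 : ℂ)/5740783002399153032663798656)*l^2 + ((-1911615104679597992792 : ℂ)/44849867206243383067685927)*τ + ((16262825340573722121 : ℂ)/358798937649947064541487416)*τ*l + ((124706984627198820428053 : ℂ)/104410490856134595781572838056)*τ^2) * he2 + (((-2766745472336569665937533 : ℂ)/2870391501199576516331899328) + ((-19929887028652248101223 : ℂ)/1435195750599788258165949664)*l + ((-18525174049631354591139 : ℂ)/1435195750599788258165949664)*τ + ((4400104928403743087283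 : ℂ)/5740783002399153032663798656)*τ*l + ((2535421048770609544797 : ℂ)/2870391501199576516331899328)*τ^2) * he3 + (((-4372592853643793039674971 : ℂ)/5740783002399153032663798656)) * he4
    exact one_ne_zero this

lemma hu : IsUnit u := by
  rw [u, Polynomial.isUnit_C, Polynomial.isUnit_C, Polynomial.isUnit_C, isUnit_iff_ne_zero]
  norm_num

lemma hQmonic : Q.Monic := by
  apply Polynomial.monic_of_natDegree_le_of_coeff_eq_one 3
  · unfold Q u P b3 b2 b1 b0 Z
    compute_degree
  · rw [Q, u, Polynomial.coeff_C_mul, P]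
    simp only [Polynomial.coeff_add, Polynomial.coeff_C_mul, Polynomial.coeff_X_pow, Polynomial.coeff_C, Polynomial.coeff_X]
    norm_num [b3, ← map_mul]

lemma hQ3 : Q.natDegree = 3 := by
  refine le_antisymm ?_ (Polynomial.le_natDegree_of_ne_zero ?_)
  · unfold Q u P b3 b2 b1 b0 Z
    compute_degree
  · have := hQmonic
    rw [Q, u, Polynomial.coeff_C_mul, P]
    simp only [Polynomial.coeff_add, Polynomial.coeff_C_mul, Polynomial.coeff_X_pow, Polynomial.coeff_C, Polynomial.coeff_X]
    norm_num [b3, ← map_mul]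

lemma hQirr : Irreducible Q := by
  rw [hQmonic.irreducible_iff_irreducible_map_fraction_map (K := FractionRing B)]
  have hmap3 : (Q.map (algebraMap B (FractionRing B))).natDegree = 3 := by
    rw [hQmonic.natDegree_map, hQ3]
  rw [Polynomial.irreducible_iff_roots_eq_zero_of_degree_le_three (by omega) (by omega)]
  by_contra hne
  obtain ⟨α, hα⟩ := Multiset.exists_mem_of_ne_zero hne
  rw [Polynomial.mem_roots ((hQmonic.map _).ne_zero)] at hα
  have hint : IsIntegral B α := ⟨Q, hQmonic, by rw [← Polynomial.eval_map]; exact hα⟩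
  obtain ⟨r, hr⟩ := IsIntegrallyClosed.isIntegral_iff.mp hint
  have hev : Q.eval r = 0 := by
    apply IsFractionRing.injective B (FractionRing B)
    rw [map_zero]
    have := hα
    rw [Polynomial.IsRoot, ← hr, Polynomial.eval_map, Polynomial.eval₂_at_apply] at this
    exact this
  have hPev : P.eval r = 0 := by
    have hQP : Q.eval r = Polynomial.C (Polynomial.C ((17 : ℂ)⁻¹)) * P.eval r := by
      rw [Q, u, Polynomial.eval_mul, Polynomial.eval_C]
    rw [hQP] at hev
    rcases mul_eq_zero.mp hev with hh | hh
    · exfalso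
      rw [Polynomial.C_eq_zero, Polynomial.C_eq_zero] at hh
      norm_num at hh
    · exact hh
  apply key r
  rw [P] at hPev
  simpa using hPev

lemma hPirr : Irreducible P := by
  have := hQirr
  rwa [Q, irreducible_isUnit_mul hu] at this

end

end StmtAux

theorem stmt2 : Irreducible C3 := by
  have h : Irreducible (StmtAux.Phi C3) := by
    rw [StmtAux.hPhiC3]; exact StmtAux.hPirr
  exact Irreducible.of_map (f := StmtAux.Phi) h
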